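/- Let N be an odd positive integer, θ ∈ (0, π/2), k ∈ {0, 1, …, 2N−1}, λ_k = exp(πik/N), and C = 2N/(1 + (−1)^k·cos^N θ). Define the 2×2 matrix ρ_k by (ρ_k)_{c,c'} = (1/C)·Σ_{n=0}^{N−1} v_c(n)·conj(v_{c'}(n)), where v_0(n) = a_n(λ_k) and v_1(n) = b_n(λ_k) (this is the reduced density matrix of the coin in the normalized eigenstate with eigenvalue λ_k). Then ρ_k = (1/2)·[[1 + (−1)^k·cos^N θ, (−1)^k·cos^N θ·tanθ], [(−1)^k·cos^N θ·tanθ, 1 − (−1)^k·cos^N θ]]. -/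

import Mathlib

open Complex
open Finset


lemma one_add_ne (z : ℂ) (hz : ‖z‖ ≠ 1) : 1 + z ≠ 0 := by
  intro h
  apply hz
  have hz1 : z = -1 := by linear_combination h
  rw [hz1]; simp

lemma sumA (N : ℕ) (hN : Odd N) (ζ : ℂ) (hζ : IsPrimitiveRoot ζ N) (μ : ℂ)
    (hμ : ‖μ‖ ≠ 1) :
    ∑ n ∈ Finset.range N, (1 + μ * ζ ^ n)⁻¹ = N / (1 + μ ^ N) := by
  have hN0 : N ≠ 0 := hN.pos.ne'
  have habsζ : ‖ζ‖ = 1 := hζ.norm'_eq_one hN0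
  have hterm : ∀ n : ℕ, 1 + μ * ζ ^ n ≠ 0 := by
    intro n
    apply one_add_ne
    rw [norm_mul, norm_pow, habsζ, one_pow, mul_one]
    exact hμ
  have hpowne : 1 + μ ^ N ≠ 0 := by
    apply one_add_ne
    rw [norm_pow]
    rcases lt_or_gt_of_ne hμ with h | h
    · exact ne_of_lt (pow_lt_one₀ (norm_nonneg μ) h hN0)
    · exact ne_of_gt (one_lt_pow₀ h hN0)
  have key : ∀ n : ℕ, (1 + μ * ζ ^ n)⁻¹
      = (1 + μ ^ N)⁻¹ * ∑ m ∈ range N, (-(μ * ζ ^ n)) ^ m := by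
    intro n
    have h := geom_sum_mul (-(μ * ζ ^ n)) N
    have hx : (-(μ * ζ ^ n)) ^ N = -(μ ^ N) := by
      rw [hN.neg_pow, mul_pow, ← pow_mul, mul_comm n N, pow_mul, hζ.pow_eq_one, one_pow, mul_one]
    rw [hx] at h
    have h2 : (∑ m ∈ range N, (-(μ * ζ ^ n)) ^ m) * (1 + μ * ζ ^ n) = 1 + μ ^ N := by
      linear_combination -h
    refine inv_eq_of_mul_eq_one_right ?_
    calc (1 + μ * ζ ^ n) * ((1 + μ ^ N)⁻¹ * ∑ m ∈ range N, (-(μ * ζ ^ n)) ^ m)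
        = (1 + μ ^ N)⁻¹ * ((∑ m ∈ range N, (-(μ * ζ ^ n)) ^ m) * (1 + μ * ζ ^ n)) := by ring
      _ = 1 := by rw [h2, inv_mul_cancel₀ hpowne]
  rw [Finset.sum_congr rfl (fun n _ => key n), ← Finset.mul_sum]
  have hswap : ∑ n ∈ range N, ∑ m ∈ range N, (-(μ * ζ ^ n)) ^ m = N := by
    have hre : ∀ n m : ℕ, (-(μ * ζ ^ n)) ^ m = (-μ) ^ m * (ζ ^ m) ^ n := by
      intro n m
      rw [show -(μ * ζ ^ n) = -μ * ζ ^ n by ring, mul_pow, ← pow_mul, mul_comm n m, pow_mul]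
    rw [Finset.sum_comm]
    rw [Finset.sum_congr rfl (fun m _ => Finset.sum_congr rfl (fun n _ => hre n m))]
    rw [Finset.sum_congr rfl (fun m _ => (Finset.mul_sum _ _ _).symm)]
    rw [Finset.sum_eq_single 0]
    · simp
    · intro m hm hm0
      have hz : (ζ ^ m) ^ N = 1 := by
        rw [← pow_mul, mul_comm, pow_mul, hζ.pow_eq_one, one_pow]
      have hne : ζ ^ m ≠ 1 := hζ.pow_ne_one_of_pos_of_lt hm0 (mem_range.mp hm)
      have h := geom_sum_mul (ζ ^ m) N
      rw [hz, sub_self] at h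
      rw [(mul_eq_zero.mp h).resolve_right (sub_ne_zero.mpr hne), mul_zero]
    · intro h; exact absurd (mem_range.mpr hN.pos) h
  rw [hswap, div_eq_mul_inv, mul_comm]

lemma pf (cc ss L x : ℂ) (hc : cc ≠ 0) (hL : L ≠ 0) (hx : x ≠ 0)
    (hpy : ss ^ 2 + cc ^ 2 = 1)
    (h1 : 1 + L * x⁻¹ / cc ≠ 0) (h2 : 1 + L⁻¹ * x / cc ≠ 0) (h3 : 1 + cc * L⁻¹ * x ≠ 0) :
    (ss / cc) ^ 2 / ((1 + L * x⁻¹ / cc) * (1 + L⁻¹ * x / cc))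
      = (1 + cc * L⁻¹ * x)⁻¹ - (1 + L⁻¹ * x / cc)⁻¹ := by
  have h1' : cc * x + L ≠ 0 := by
    intro h; apply h1
    rw [show 1 + L * x⁻¹ / cc = (cc * x + L) / (cc * x) by field_simp, h, zero_div]
  have h2' : cc * L + x ≠ 0 := by
    intro h; apply h2
    rw [show 1 + L⁻¹ * x / cc = (cc * L + x) / (cc * L) by field_simp, h, zero_div]
  have h3' : L + cc * x ≠ 0 := by
    intro h; apply h3
    rw [show 1 + cc * L⁻¹ * x = (L + cc * x) / L by field_simp, h, zero_div]
  rw [show 1 + L * x⁻¹ / cc = (cc * x + L) / (cc * x) by field_simp,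
      show 1 + L⁻¹ * x / cc = (cc * L + x) / (cc * L) by field_simp,
      show 1 + cc * L⁻¹ * x = (L + cc * x) / L by field_simp,
      div_pow, show ss ^ 2 = 1 - cc ^ 2 by linear_combination hpy]
  field_simp
  ring

lemma entryAB (q e s c n2 : ℂ) (hq : q ≠ 0) (hc : c ≠ 0) (hn : n2 ≠ 0)
    (he2 : e * e = 1) (hPQ : q + e ≠ 0) (h1P : 1 + e * q ≠ 0) :
    1 / (2 * n2 / (1 + e * q)) * (s / c * (n2 * q / (q + e))) = 1 / 2 * (e * q * (s / c)) := by
  field_simp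
  linear_combination (-s) * he2
lemma entryBB (q e n2 : ℂ) (hq : q ≠ 0) (hn : n2 ≠ 0)
    (he2 : e * e = 1) (hPQ : q + e ≠ 0) (h1P : 1 + e * q ≠ 0) (h1P' : 1 + q * e ≠ 0) :
    1 / (2 * n2 / (1 + e * q)) * (n2 / (1 + q * e) - n2 * q / (q + e)) = 1 / 2 * (1 - e * q) := by
  field_simp
  linear_combination q * he2


/-- `ω = exp(2πi/N)`. -/
noncomputable def omegaN (N : ℕ) : ℂ := Complex.exp (2 * Real.pi * Complex.I / N)

/-- `a_n(λ) = ω^(−n(n−1)/2) · ∏_{j=0}^{n−1} (1 + λ⁻¹ωʲ/cosθ)/(1 + λω⁻ʲ/cosθ)`. -/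
noncomputable def aCoef (N : ℕ) (θ : ℝ) (lam : ℂ) (n : ℕ) : ℂ :=
  (omegaN N)⁻¹ ^ (n * (n - 1) / 2) *
    ∏ j ∈ Finset.range n,
      (1 + lam⁻¹ * omegaN N ^ j / (Real.cos θ : ℂ)) /
      (1 + lam * (omegaN N)⁻¹ ^ j / (Real.cos θ : ℂ))

/-- `b_n(λ) = a_n(λ)·tanθ/(1 + λω⁻ⁿ/cosθ)`. -/
noncomputable def bCoef (N : ℕ) (θ : ℝ) (lam : ℂ) (n : ℕ) : ℂ :=
  aCoef N θ lam n * (Real.tan θ : ℂ) / (1 + lam * (omegaN N)⁻¹ ^ n / (Real.cos θ : ℂ))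

/-- The reduced density matrix of the coin in the normalized eigenstate with
eigenvalue `λ`: `(ρ)_{c,c'} = (1/C)·Σ_{n<N} v_c(n)·conj(v_{c'}(n))` where
`v_0(n) = a_n(λ)` and `v_1(n) = b_n(λ)`. -/
noncomputable def coinRho (N : ℕ) (θ : ℝ) (lam : ℂ) (C : ℂ) :
    Matrix (Fin 2) (Fin 2) ℂ := fun c c' =>
  (1 / C) * ∑ n ∈ Finset.range N,
    (if c = 0 then aCoef N θ lam n else bCoef N θ lam n) *
      (starRingEnd ℂ) (if c' = 0 then aCoef N θ lam n else bCoef N θ lam n)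

/-- for odd `N`, `θ ∈ (0, π/2)`, `0 ≤ k < 2N`, `λ_k = exp(πik/N)` and
`C = 2N/(1 + (−1)ᵏcosᴺθ)`, the reduced density matrix of the coin is
`ρ_k = (1/2)·[[1 + (−1)ᵏcosᴺθ, (−1)ᵏcosᴺθ·tanθ], [(−1)ᵏcosᴺθ·tanθ, 1 − (−1)ᵏcosᴺθ]]`. -/
theorem psw_coin_reduced_density (N : ℕ) [NeZero N] (hN : Odd N)
    (θ : ℝ) (hθ : θ ∈ Set.Ioo 0 (Real.pi / 2))
    (k : ℕ) (hk : k < 2 * N)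
    (lam : ℂ) (hlam : lam = Complex.exp (Real.pi * Complex.I * k / N))
    (C : ℂ) (hC : C = 2 * N / (1 + (-1 : ℂ) ^ k * (Real.cos θ : ℂ) ^ N)) :
    coinRho N θ lam C
      = (1 / 2 : ℂ) •
        !![1 + (-1 : ℂ) ^ k * (Real.cos θ : ℂ) ^ N,
             (-1 : ℂ) ^ k * (Real.cos θ : ℂ) ^ N * (Real.tan θ : ℂ);
           (-1 : ℂ) ^ k * (Real.cos θ : ℂ) ^ N * (Real.tan θ : ℂ),
             1 - (-1 : ℂ) ^ k * (Real.cos θ : ℂ) ^ N] := by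
  obtain ⟨hθ0, hθ2⟩ := hθ
  have hN0 : N ≠ 0 := NeZero.ne N
  have hNne : (N : ℂ) ≠ 0 := Nat.cast_ne_zero.mpr hN0
  have hcR : 0 < Real.cos θ := Real.cos_pos_of_mem_Ioo ⟨by linarith [Real.pi_pos], hθ2⟩
  have hsR : 0 < Real.sin θ :=
    Real.sin_pos_of_pos_of_lt_pi hθ0 (by linarith [Real.pi_pos])
  have hcR1 : Real.cos θ < 1 := by nlinarith [Real.sin_sq_add_cos_sq θ]
  have hcne : (Real.cos θ : ℂ) ≠ 0 := Complex.ofReal_ne_zero.mpr hcR.ne'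
  have habsc : ‖((Real.cos θ : ℂ))‖ = Real.cos θ := by
    rw [Complex.norm_real, Real.norm_eq_abs, abs_of_pos hcR]
  -- omega facts
  have hprim : IsPrimitiveRoot (omegaN N) N := Complex.isPrimitiveRoot_exp N hN0
  have habsω : ‖omegaN N‖ = 1 := hprim.norm'_eq_one hN0
  have hωne : omegaN N ≠ 0 := by
    intro h; rw [h] at habsω; simp at habsω
  have hconjω : (starRingEnd ℂ) (omegaN N) = (omegaN N)⁻¹ := (Complex.inv_eq_conj habsω).symm
  -- lam facts
  have habslam : ‖lam‖ = 1 := by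
    rw [hlam, show Real.pi * Complex.I * k / N = ((Real.pi * k / N : ℝ) : ℂ) * Complex.I by
      push_cast; ring, Complex.norm_exp_ofReal_mul_I]
  have hlamne : lam ≠ 0 := by rw [hlam]; exact Complex.exp_ne_zero _
  have hconjlam : (starRingEnd ℂ) lam = lam⁻¹ := (Complex.inv_eq_conj habslam).symm
  have hlamN : lam ^ N = (-1 : ℂ) ^ k := by
    rw [hlam, ← Complex.exp_nat_mul,
      show (N : ℂ) * (Real.pi * Complex.I * k / N) = k * (Real.pi * Complex.I) by
        field_simp,
      Complex.exp_nat_mul, Complex.exp_pi_mul_I]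
  -- epsilon
  set ε : ℂ := (-1 : ℂ) ^ k with hεdef
  have hε2 : ε * ε = 1 := by
    rw [hεdef, ← pow_add, ← two_mul, pow_mul]; norm_num
  have hεne : ε ≠ 0 := by
    intro h; rw [h, mul_zero] at hε2; exact zero_ne_one hε2
  have hεinv : ε⁻¹ = ε := by
    field_simp
    linear_combination -hε2
  -- denominators nonzero
  have habsinv : ‖(omegaN N)⁻¹‖ = 1 := by rw [norm_inv, habsω, inv_one]
  have hinvc1 : (Real.cos θ)⁻¹ ≠ 1 := by
    have : 1 < (Real.cos θ)⁻¹ := (one_lt_inv₀ hcR).mpr hcR1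
    exact this.ne'
  have hD : ∀ j : ℕ, 1 + lam * (omegaN N)⁻¹ ^ j / (Real.cos θ : ℂ) ≠ 0 := by
    intro j
    apply one_add_ne
    rw [norm_div, norm_mul, norm_pow, habsinv, habslam, one_pow, mul_one, habsc]
    simpa using hinvc1
  have hE : ∀ j : ℕ, 1 + lam⁻¹ * omegaN N ^ j / (Real.cos θ : ℂ) ≠ 0 := by
    intro j
    apply one_add_ne
    rw [norm_div, norm_mul, norm_pow, norm_inv, habsω, habslam, one_pow, inv_one, one_mul, habsc]
    simpa using hinvc1
  -- conjugation of a
  have hconjfrac : ∀ j : ℕ,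
      (starRingEnd ℂ) ((1 + lam⁻¹ * omegaN N ^ j / (Real.cos θ : ℂ)) /
        (1 + lam * (omegaN N)⁻¹ ^ j / (Real.cos θ : ℂ)))
      = (1 + lam * (omegaN N)⁻¹ ^ j / (Real.cos θ : ℂ)) /
        (1 + lam⁻¹ * omegaN N ^ j / (Real.cos θ : ℂ)) := by
    intro j
    simp only [map_div₀, map_add, map_one, map_mul, map_pow, map_inv₀, hconjω, hconjlam,
      inv_inv, Complex.conj_ofReal]
  have hconja : ∀ n : ℕ, (starRingEnd ℂ) (aCoef N θ lam n)
      = omegaN N ^ (n * (n - 1) / 2) *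
        ∏ j ∈ Finset.range n,
          (1 + lam * (omegaN N)⁻¹ ^ j / (Real.cos θ : ℂ)) /
          (1 + lam⁻¹ * omegaN N ^ j / (Real.cos θ : ℂ)) := by
    intro n
    rw [aCoef, map_mul, map_pow, map_inv₀, hconjω, inv_inv, map_prod]
    rw [Finset.prod_congr rfl (fun j _ => hconjfrac j)]
  have key_a : ∀ n : ℕ, aCoef N θ lam n * (starRingEnd ℂ) (aCoef N θ lam n) = 1 := by
    intro n
    rw [hconja, aCoef, mul_mul_mul_comm, ← mul_pow, inv_mul_cancel₀ hωne, one_pow, one_mul,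
      ← Finset.prod_mul_distrib]
    refine Finset.prod_eq_one fun j _ => ?_
    rw [div_mul_div_comm,
      mul_comm (1 + lam * (omegaN N)⁻¹ ^ j / (Real.cos θ : ℂ))
        (1 + lam⁻¹ * omegaN N ^ j / (Real.cos θ : ℂ)),
      div_self (mul_ne_zero (hE j) (hD j))]
  have hconjD : ∀ n : ℕ, (starRingEnd ℂ) (1 + lam * (omegaN N)⁻¹ ^ n / (Real.cos θ : ℂ))
      = 1 + lam⁻¹ * omegaN N ^ n / (Real.cos θ : ℂ) := by
    intro n
    simp only [map_add, map_one, map_div₀, map_mul, map_pow, map_inv₀, hconjω, hconjlam,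
      inv_inv, Complex.conj_ofReal]
  have htan : (Real.tan θ : ℂ) = (Real.sin θ : ℂ) / (Real.cos θ : ℂ) := by
    rw [Real.tan_eq_sin_div_cos, Complex.ofReal_div]
  have hpy : (Real.sin θ : ℂ) ^ 2 + (Real.cos θ : ℂ) ^ 2 = 1 := by
    norm_cast
    exact Real.sin_sq_add_cos_sq θ
  have hF : ∀ n : ℕ, 1 + (Real.cos θ : ℂ) * lam⁻¹ * omegaN N ^ n ≠ 0 := by
    intro n
    apply one_add_ne
    rw [norm_mul, norm_mul, norm_pow, norm_inv, habsω, habslam, one_pow, inv_one, mul_one,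
      mul_one, habsc]
    exact hcR1.ne
  have key_ab : ∀ n : ℕ, aCoef N θ lam n * (starRingEnd ℂ) (bCoef N θ lam n)
      = ((Real.sin θ : ℂ) / (Real.cos θ : ℂ)) *
        (1 + (lam⁻¹ / (Real.cos θ : ℂ)) * omegaN N ^ n)⁻¹ := by
    intro n
    rw [bCoef, map_div₀, map_mul, Complex.conj_ofReal, hconjD]
    rw [show aCoef N θ lam n * ((starRingEnd ℂ) (aCoef N θ lam n) * (Real.tan θ : ℂ) /
        (1 + lam⁻¹ * omegaN N ^ n / (Real.cos θ : ℂ)))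
      = aCoef N θ lam n * (starRingEnd ℂ) (aCoef N θ lam n) * ((Real.tan θ : ℂ) *
        (1 + lam⁻¹ * omegaN N ^ n / (Real.cos θ : ℂ))⁻¹) by ring]
    rw [key_a, one_mul, htan, show 1 + lam⁻¹ * omegaN N ^ n / (Real.cos θ : ℂ)
      = 1 + (lam⁻¹ / (Real.cos θ : ℂ)) * omegaN N ^ n by ring]
  have key_ba : ∀ n : ℕ, bCoef N θ lam n * (starRingEnd ℂ) (aCoef N θ lam n)
      = ((Real.sin θ : ℂ) / (Real.cos θ : ℂ)) *
        (1 + (lam / (Real.cos θ : ℂ)) * ((omegaN N)⁻¹) ^ n)⁻¹ := by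
    intro n
    rw [bCoef]
    rw [show aCoef N θ lam n * (Real.tan θ : ℂ) /
        (1 + lam * (omegaN N)⁻¹ ^ n / (Real.cos θ : ℂ)) * (starRingEnd ℂ) (aCoef N θ lam n)
      = aCoef N θ lam n * (starRingEnd ℂ) (aCoef N θ lam n) * ((Real.tan θ : ℂ) *
        (1 + lam * (omegaN N)⁻¹ ^ n / (Real.cos θ : ℂ))⁻¹) by ring]
    rw [key_a, one_mul, htan, show 1 + lam * (omegaN N)⁻¹ ^ n / (Real.cos θ : ℂ)
      = 1 + (lam / (Real.cos θ : ℂ)) * ((omegaN N)⁻¹) ^ n by ring]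
  have key_bb : ∀ n : ℕ, bCoef N θ lam n * (starRingEnd ℂ) (bCoef N θ lam n)
      = (1 + (Real.cos θ : ℂ) * lam⁻¹ * omegaN N ^ n)⁻¹
        - (1 + (lam⁻¹ / (Real.cos θ : ℂ)) * omegaN N ^ n)⁻¹ := by
    intro n
    rw [bCoef, map_div₀, map_mul, Complex.conj_ofReal, hconjD]
    rw [show aCoef N θ lam n * (Real.tan θ : ℂ) /
        (1 + lam * (omegaN N)⁻¹ ^ n / (Real.cos θ : ℂ)) *
        ((starRingEnd ℂ) (aCoef N θ lam n) * (Real.tan θ : ℂ) /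
          (1 + lam⁻¹ * omegaN N ^ n / (Real.cos θ : ℂ)))
      = aCoef N θ lam n * (starRingEnd ℂ) (aCoef N θ lam n) *
        (((Real.tan θ : ℂ) / (1 + lam * (omegaN N)⁻¹ ^ n / (Real.cos θ : ℂ))) *
         ((Real.tan θ : ℂ) / (1 + lam⁻¹ * omegaN N ^ n / (Real.cos θ : ℂ)))) by ring]
    rw [key_a, one_mul, div_mul_div_comm, ← pow_two, htan, inv_pow]
    rw [pf (Real.cos θ : ℂ) (Real.sin θ : ℂ) lam (omegaN N ^ n) hcne hlamne
      (pow_ne_zero n hωne) hpy (by rw [← inv_pow]; exact hD n) (hE n) (hF n)]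
    rw [show 1 + lam⁻¹ * omegaN N ^ n / (Real.cos θ : ℂ)
      = 1 + (lam⁻¹ / (Real.cos θ : ℂ)) * omegaN N ^ n by ring]
  -- sums
  have habsmu1 : ‖lam⁻¹ / (Real.cos θ : ℂ)‖ ≠ 1 := by
    rw [norm_div, norm_inv, habslam, inv_one, habsc]
    simpa using hinvc1
  have habsmu2 : ‖lam / (Real.cos θ : ℂ)‖ ≠ 1 := by
    rw [norm_div, habslam, habsc]
    simpa using hinvc1
  have habsmu3 : ‖(Real.cos θ : ℂ) * lam⁻¹‖ ≠ 1 := by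
    rw [norm_mul, norm_inv, habslam, inv_one, mul_one, habsc]
    exact hcR1.ne
  have hcNne : (Real.cos θ : ℂ) ^ N ≠ 0 := pow_ne_zero N hcne
  have h1P : 1 + ε * (Real.cos θ : ℂ) ^ N ≠ 0 := by
    rw [hεdef, show (1 : ℂ) + (-1 : ℂ) ^ k * (Real.cos θ : ℂ) ^ N
      = ((1 + (-1 : ℝ) ^ k * Real.cos θ ^ N : ℝ) : ℂ) by push_cast; ring,
      Complex.ofReal_ne_zero]
    have hpow1 : Real.cos θ ^ N < 1 := pow_lt_one₀ hcR.le hcR1 hN0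
    have hpow0 : 0 < Real.cos θ ^ N := pow_pos hcR N
    rcases Nat.even_or_odd k with hk2 | hk2
    · rw [hk2.neg_one_pow]; nlinarith
    · rw [hk2.neg_one_pow]; nlinarith
  have hPQ : (Real.cos θ : ℂ) ^ N + ε ≠ 0 := by
    rw [show (Real.cos θ : ℂ) ^ N + ε = ε * (1 + ε * (Real.cos θ : ℂ) ^ N) by
      linear_combination (-(Real.cos θ : ℂ) ^ N) * hε2]
    exact mul_ne_zero hεne h1P
  have hS1 : ∑ n ∈ range N, (1 + (lam⁻¹ / (Real.cos θ : ℂ)) * omegaN N ^ n)⁻¹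
      = (N : ℂ) * (Real.cos θ : ℂ) ^ N / ((Real.cos θ : ℂ) ^ N + ε) := by
    rw [sumA N hN (omegaN N) hprim _ habsmu1, div_pow, inv_pow, hlamN, hεinv,
      show 1 + ε / (Real.cos θ : ℂ) ^ N
        = ((Real.cos θ : ℂ) ^ N + ε) / (Real.cos θ : ℂ) ^ N by rw [add_div, div_self hcNne],
      div_div_eq_mul_div]
  have hS2 : ∑ n ∈ range N, (1 + (lam / (Real.cos θ : ℂ)) * ((omegaN N)⁻¹) ^ n)⁻¹
      = (N : ℂ) * (Real.cos θ : ℂ) ^ N / ((Real.cos θ : ℂ) ^ N + ε) := by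
    rw [sumA N hN ((omegaN N)⁻¹) hprim.inv _ habsmu2, div_pow, hlamN,
      show 1 + ε / (Real.cos θ : ℂ) ^ N
        = ((Real.cos θ : ℂ) ^ N + ε) / (Real.cos θ : ℂ) ^ N by rw [add_div, div_self hcNne],
      div_div_eq_mul_div]
  have hS3 : ∑ n ∈ range N, (1 + (Real.cos θ : ℂ) * lam⁻¹ * omegaN N ^ n)⁻¹
      = (N : ℂ) / (1 + (Real.cos θ : ℂ) ^ N * ε) := by
    rw [sumA N hN (omegaN N) hprim _ habsmu3, mul_pow, inv_pow, hlamN, hεinv]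
  have hεc : ε = 1 ∨ ε = -1 := by
    rcases Nat.even_or_odd k with h | h
    · left; rw [hεdef, h.neg_one_pow]
    · right; rw [hεdef, h.neg_one_pow]
  ext i j
  fin_cases i <;> fin_cases j
  all_goals simp only [coinRho, Fin.zero_eta, Fin.mk_one, Fin.isValue, Matrix.smul_apply,
    smul_eq_mul, Matrix.of_apply, Matrix.cons_val', Matrix.cons_val_zero, Matrix.cons_val_one,
    Matrix.head_cons, Matrix.head_fin_const, Matrix.empty_val', Matrix.cons_val_fin_one,
    if_true, one_ne_zero, if_false]
  · rw [Finset.sum_congr rfl fun n _ => key_a n, Finset.sum_const, Finset.card_range,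
      nsmul_eq_mul, mul_one, hC]
    rw [one_div_mul_eq_div, div_div_eq_mul_div, div_eq_iff (mul_ne_zero two_ne_zero hNne)]
    ring
  · rw [Finset.sum_congr rfl fun n _ => key_ab n, ← Finset.mul_sum, hS1, hC, htan]
    exact entryAB _ _ _ _ _ hcNne hcne hNne hε2 hPQ h1P
  · rw [Finset.sum_congr rfl fun n _ => key_ba n, ← Finset.mul_sum, hS2, hC, htan]
    exact entryAB _ _ _ _ _ hcNne hcne hNne hε2 hPQ h1P
  · rw [Finset.sum_congr rfl fun n _ => key_bb n, Finset.sum_sub_distrib, hS3, hS1, hC]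
    exact entryBB _ _ _ hcNne hNne hε2 hPQ h1P (by rw [mul_comm]; exact h1P)
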